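/- Let A be an associative unital Rota–Baxter algebra of weight λ with RB-operator R over a field of characteristic zero. Then for all n ≥ 1: (R(1))ⁿ = Σ_{k=1}^{n} k! λ^{n-k} S(n,k) R^k(1), where S(n,k) are Stirling numbers of the second kind. -/
import Mathlib


/-- A Rota–Baxter operator of weight `lam` on an algebra over a field `F`. -/
def IsRotaBaxter (F : Type*) {A : Type*} [Field F] [NonUnitalNonAssocRing A]
    [Module F A] (lam : F) (R : A →ₗ[F] A) : Prop :=
  ∀ x y : A, R x * R y = R (R x * y + x * R y + lam • (x * y))

/-- Stirling numbers of the second kind: `stirlingSecond n k` is the number of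
partitions of an `n`-element set into `k` nonempty blocks. -/
def stirlingSecond : ℕ → ℕ → ℕ
  | 0, 0 => 1
  | 0, _ + 1 => 0
  | _ + 1, 0 => 0
  | n + 1, k + 1 => stirlingSecond n k + (k + 1) * stirlingSecond n (k + 1)

lemma stirling_zero_of_lt : ∀ n k, n < k → stirlingSecond n k = 0 := by
  intro n
  induction n with
  | zero =>
    intro k hk
    match k with
    | k + 1 => rfl
  | succ n ih =>
    intro k hk
    match k with
    | k + 1 =>
      simp [stirlingSecond, ih k (by omega), ih (k+1) (by omega)]

section RBaux
variable {F A : Type*} [Field F] [Ring A] [Algebra F A]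

lemma rb_key (lam : F) (R : A →ₗ[F] A) (hR : IsRotaBaxter F lam R) :
    ∀ k : ℕ, (R ^ k) 1 * R 1
      = ((k:F)+1) • (R ^ (k+1)) 1 + ((k:F) * lam) • (R ^ k) 1 := by
  have hpow : ∀ k : ℕ, (R ^ (k+1)) (1:A) = R ((R ^ k) 1) := by
    intro k; rw [pow_succ']; rfl
  intro k
  induction k with
  | zero => simp [hpow]
  | succ k ih =>
    have h := hR ((R ^ k) 1) 1
    rw [mul_one, mul_one] at h
    rw [hpow, h, ih]
    simp only [map_add, map_smul, ← hpow]
    push_cast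
    module

end RBaux

/-- The coefficient `k! λ^(n-k) S(n,k)`. -/
noncomputable def rbC {F : Type*} [Field F] (lam : F) (n k : ℕ) : F :=
  (Nat.factorial k : F) * lam ^ (n - k) * (stirlingSecond n k : F)

section RBmain
variable {F A : Type*} [Field F] [Ring A] [Algebra F A]

lemma rb_coeff_rec (lam : F) {n k : ℕ} (hk : k ≤ n) :
    rbC lam (n+1) (k+1)
      = rbC lam n k * ((k:F)+1) + rbC lam n (k+1) * (((k:F)+1)*lam) := by
  rcases eq_or_lt_of_le hk with h | h
  · subst h
    simp [rbC, stirlingSecond, stirling_zero_of_lt k (k+1) (by omega),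
      Nat.factorial_succ]
    ring
  · obtain ⟨m, rfl⟩ : ∃ m, n = k + m + 1 := ⟨n - k - 1, by omega⟩
    simp only [rbC, stirlingSecond, Nat.factorial_succ,
      show k+m+1+1-(k+1)=m+1 from by omega, show k+m+1-k=m+1 from by omega,
      show k+m+1-(k+1)=m from by omega]
    push_cast
    ring

lemma rb_main' (lam : F) (R : A →ₗ[F] A) (hR : IsRotaBaxter F lam R) (n : ℕ) :
    (R 1) ^ n = ∑ k ∈ Finset.range (n+1), rbC lam n k • (R ^ k) (1:A) := by
  induction n with
  | zero => simp [rbC, stirlingSecond]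
  | succ n ih =>
    rw [pow_succ, ih, Finset.sum_mul]
    simp_rw [smul_mul_assoc, rb_key lam R hR, smul_add, smul_smul]
    rw [Finset.sum_add_distrib]
    rw [Finset.sum_range_succ' (fun k => rbC lam (n+1) k • (R ^ k) (1:A)) (n+1)]
    have h0 : rbC lam (n+1) 0 • (R ^ 0) (1:A) = 0 := by
      simp [rbC, stirlingSecond]
    rw [h0, add_zero]
    have hS2 : ∑ k ∈ Finset.range (n+1), (rbC lam n k * ((k:F)*lam)) • (R^k) (1:A)
        = ∑ k ∈ Finset.range (n+1),
            (rbC lam n (k+1) * (((k:F)+1)*lam)) • (R^(k+1)) (1:A) := by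
      rw [Finset.sum_range_succ' (fun k => (rbC lam n k * ((k:F)*lam)) • (R^k) (1:A)) n]
      rw [Finset.sum_range_succ
        (fun k => (rbC lam n (k+1) * (((k:F)+1)*lam)) • (R^(k+1)) (1:A)) n]
      have hn : (rbC lam n (n+1) * (((n:F)+1)*lam)) • (R^(n+1)) (1:A) = 0 := by
        simp [rbC, stirling_zero_of_lt n (n+1) (by omega)]
      simp [hn]
    rw [hS2, ← Finset.sum_add_distrib]
    refine Finset.sum_congr rfl fun k hk => ?_
    rw [← add_smul, ← rb_coeff_rec lam (Finset.mem_range_succ_iff.mp hk)]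

end RBmain

/-- `(R 1)ⁿ = Σ_{k=1}^n k! λ^(n-k) S(n,k) R^k(1)`. -/
theorem rb_stirling_second {F A : Type*} [Field F] [CharZero F] [Ring A] [Algebra F A]
    (lam : F) (R : A →ₗ[F] A) (hR : IsRotaBaxter F lam R) (n : ℕ) (hn : 1 ≤ n) :
    (R 1) ^ n
      = ∑ k ∈ Finset.Icc 1 n,
          (((Nat.factorial k : ℕ) : F) * lam ^ (n - k) * (stirlingSecond n k : F))
            • ((R ^ k) (1 : A)) := by
  rw [rb_main' lam R hR n]
  have hset : Finset.range (n+1) = insert 0 (Finset.Icc 1 n) := by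
    ext x; simp; omega
  rw [hset, Finset.sum_insert (by simp)]
  obtain ⟨m, rfl⟩ : ∃ m, n = m + 1 := ⟨n - 1, by omega⟩
  simp [rbC, stirlingSecond]
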